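/- Let Δ, v, w, t be positive reals with t·(v + w)² ≤ Δ·(v + 2w), and let t̃ be a real with t̃ ≥ w·t/(v + 2w). Then t̃ ≥ (1/2)·(t − Δ/(w + w²/v)). -/

import Mathlib

theorem stmt_12 (Δ v w t : ℝ) (hΔ : 0 < Δ) (hv : 0 < v) (hw : 0 < w) (ht : 0 < t)
    (hfeas : t * (v + w) ^ 2 ≤ Δ * (v + 2 * w))
    (ttilde : ℝ) (httilde : ttilde ≥ w * t / (v + 2 * w)) :
    ttilde ≥ (1 / 2) * (t - Δ / (w + w ^ 2 / v)) := by
  have hd : Δ / (w + w ^ 2 / v) = Δ * v / (w * (v + w)) := by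
    rw [div_eq_div_iff (by positivity) (by positivity)]
    field_simp
  have he : t - 2 * (w * t / (v + 2 * w)) = t * v / (v + 2 * w) := by
    field_simp
    ring
  have h2 : t * v / (v + 2 * w) ≤ Δ * v / (w * (v + w)) := by
    rw [div_le_div_iff₀ (by positivity) (by positivity)]
    nlinarith [mul_le_mul_of_nonneg_left hfeas hv.le, mul_pos (mul_pos ht hv) (mul_pos hv (add_pos hv hw))]
  rw [hd]
  linarith [he ▸ h2]
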